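/- arXiv:1106.2650 — 2 statements merged into one kernel-verified Lean document; each statement's English description precedes it below -/
import Mathlib

section
/- The action profile (α₁, α₂) = (0,0) is a pure Nash equilibrium of the channel selection game if and only if g_{1,1}^{(2)} ≥ g_{1,1}^{(1)}(1 + g_{1,2}^{(2)}) and g_{2,2}^{(2)} ≥ g_{2,2}^{(1)}(1 + g_{2,1}^{(2)}). -/
open Real Set

/-- Utility of a player with direct gains `gk1 gk2`, cross gains `gi1 gi2`,
own action `a`, opponent action `b`. -/
noncomputable def u (gk1 gk2 gi1 gi2 a b : ℝ) : ℝ :=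
  Real.logb 2 (1 + a * gk1 / (1 + b * gi1)) +
  Real.logb 2 (1 + (1 - a) * gk2 / (1 + (1 - b) * gi2))

lemma u_key (gk1 gk2 gi1 gi2 : ℝ) (h1 : 0 < gk1) (h2 : 0 < gk2) (h4 : 0 < gi2) :
    u gk1 gk2 gi1 gi2 1 0 ≤ u gk1 gk2 gi1 gi2 0 0 ↔ gk1 * (1 + gi2) ≤ gk2 := by
  have hpos : (0:ℝ) < 1 + gi2 := by linarith
  have e1 : u gk1 gk2 gi1 gi2 1 0 = Real.logb 2 (1 + gk1) := by
    simp [u]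
  have e2 : u gk1 gk2 gi1 gi2 0 0 = Real.logb 2 (1 + gk2 / (1 + gi2)) := by
    simp [u]
  rw [e1, e2, Real.logb_le_logb one_lt_two (by linarith)
      (by positivity)]
  rw [add_le_add_iff_left, le_div_iff₀ hpos]

lemma u_zero (gk1 gk2 gi1 gi2 : ℝ) :
    u gk1 gk2 gi1 gi2 0 0 ≤ u gk1 gk2 gi1 gi2 0 0 := le_refl _

/-- `(0,0)` is a pure NE of the CS game iff
`g_{1,1}^{(2)} ≥ g_{1,1}^{(1)}(1+g_{1,2}^{(2)})` and `g_{2,2}^{(2)} ≥ g_{2,2}^{(1)}(1+g_{2,1}^{(2)})`. -/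
theorem cs_NE_zero_zero_iff
    (g111 g112 g121 g122 g211 g212 g221 g222 : ℝ)
    (h111 : 0 < g111) (h112 : 0 < g112) (h121 : 0 < g121) (h122 : 0 < g122)
    (h211 : 0 < g211) (h212 : 0 < g212) (h221 : 0 < g221) (h222 : 0 < g222) :
    ((∀ a1' ∈ ({0, 1} : Set ℝ),
        u g111 g112 g121 g122 a1' 0 ≤ u g111 g112 g121 g122 0 0) ∧
     (∀ a2' ∈ ({0, 1} : Set ℝ),
        u g221 g222 g211 g212 a2' 0 ≤ u g221 g222 g211 g212 0 0))
    ↔ (g111 * (1 + g122) ≤ g112 ∧ g221 * (1 + g212) ≤ g222) := by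
  constructor
  · rintro ⟨H1, H2⟩
    exact ⟨(u_key g111 g112 g121 g122 h111 h112 h122).mp
        (H1 1 (by simp)),
      (u_key g221 g222 g211 g212 h221 h222 h212).mp (H2 1 (by simp))⟩
  · rintro ⟨c1, c2⟩
    refine ⟨?_, ?_⟩ <;> rintro a (rfl | rfl)
    · exact le_refl _
    · exact (u_key g111 g112 g121 g122 h111 h112 h122).mpr c1
    · exact le_refl _
    · exact (u_key g221 g222 g211 g212 h221 h222 h212).mpr c2
end

section
/- Let clamp(x) = min(1, max(0, x)), let c₁, c₂ < 0 with c₁c₂ > 1, d₁, d₂ ∈ ℝ, and suppose the intersection point (α₁†, α₂†) of the lines α₁ = c₁α₂ + d₁ and α₂ = c₂α₁ + d₂ satisfies 0 < α₁† < 1 and 0 < α₂† < 1. Then the system α₁ = clamp(c₁α₂ + d₁), α₂ = clamp(c₂α₁ + d₂) has at least three solutions in [0,1]²: the interior point (α₁†, α₂†) and two additional solutions in which at least one coordinate lies in {0,1}. -/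
/-- Clamp to `[0,1]`. -/
noncomputable def clamp01 (x : ℝ) : ℝ := min 1 (max 0 x)

lemma clamp01_eq_self {x : ℝ} (h0 : 0 ≤ x) (h1 : x ≤ 1) : clamp01 x = x := by
  unfold clamp01; rw [max_eq_right h0, min_eq_right h1]

lemma clamp01_eq_zero {x : ℝ} (hx : x ≤ 0) : clamp01 x = 0 := by
  unfold clamp01; rw [max_eq_left hx]; norm_num

lemma clamp01_eq_one {x : ℝ} (hx : 1 ≤ x) : clamp01 x = 1 := by
  unfold clamp01; exact min_eq_left (le_trans hx (le_max_right 0 x))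

lemma clamp01_mem (x : ℝ) : clamp01 x ∈ Set.Icc (0 : ℝ) 1 :=
  ⟨le_min zero_le_one (le_max_left 0 x), min_le_left _ _⟩

lemma clamp01_lt_one {x : ℝ} (hx : x < 1) : clamp01 x < 1 :=
  lt_of_le_of_lt (min_le_right _ _) (max_lt one_pos hx)

/-- When the product of (negative) best-response slopes exceeds 1 and the
intersection of the lines lies in the open unit square, the clamped
best-response system has at least three solutions. -/
theorem clamp_affine_three_fixed_points
    (c1 c2 d1 d2 : ℝ) (hc1 : c1 < 0) (hc2 : c2 < 0) (h : 1 < c1 * c2)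
    (a1d a2d : ℝ)
    (ha2d : a2d = (d1 * c2 + d2) / (1 - c1 * c2))
    (ha1d : a1d = c1 * a2d + d1)
    (h1 : 0 < a1d) (h1' : a1d < 1) (h2 : 0 < a2d) (h2' : a2d < 1) :
    (a1d = clamp01 (c1 * a2d + d1) ∧ a2d = clamp01 (c2 * a1d + d2)) ∧
    ∃ p q : ℝ × ℝ,
      p ≠ q ∧ p ≠ (a1d, a2d) ∧ q ≠ (a1d, a2d) ∧
      p ∈ Set.Icc (0 : ℝ) 1 ×ˢ Set.Icc (0 : ℝ) 1 ∧
      q ∈ Set.Icc (0 : ℝ) 1 ×ˢ Set.Icc (0 : ℝ) 1 ∧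
      p.1 = clamp01 (c1 * p.2 + d1) ∧ p.2 = clamp01 (c2 * p.1 + d2) ∧
      q.1 = clamp01 (c1 * q.2 + d1) ∧ q.2 = clamp01 (c2 * q.1 + d2) ∧
      (p.1 ∈ ({0, 1} : Set ℝ) ∨ p.2 ∈ ({0, 1} : Set ℝ)) ∧
      (q.1 ∈ ({0, 1} : Set ℝ) ∨ q.2 ∈ ({0, 1} : Set ℝ)) := by
  have hcc : 1 - c1 * c2 < 0 := by linarith
  have hne : (1 - c1 * c2) ≠ 0 := ne_of_lt hcc
  have hmul : a2d * (1 - c1 * c2) = d1 * c2 + d2 := by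
    rw [ha2d]; exact div_mul_cancel₀ _ hne
  -- key: the interior point satisfies the second line exactly
  have hk : c2 * a1d + d2 = a2d := by
    rw [ha1d]; linear_combination -hmul
  have hd1pos : 0 < d1 := by nlinarith [mul_pos (neg_pos.2 hc1) h2]
  have hd2pos : 0 < d2 := by nlinarith [mul_pos (neg_pos.2 hc2) h1]
  have hfix1 : a1d = clamp01 (c1 * a2d + d1) := by
    rw [← ha1d, clamp01_eq_self h1.le h1'.le]
  have hfix2 : a2d = clamp01 (c2 * a1d + d2) := by
    rw [hk, clamp01_eq_self h2.le h2'.le]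
  refine ⟨⟨hfix1, hfix2⟩, ?_⟩
  -- useful identities
  have hc2d1 : c2 * d1 + d2 = a2d * (1 - c1 * c2) := by
    linear_combination hk - c2 * ha1d
  have hc1d2 : c1 * d2 + d1 = a1d * (1 - c1 * c2) := by
    linear_combination c1 * hk - ha1d
  have hc2d1neg : c2 * d1 + d2 ≤ 0 := by nlinarith
  have hc1d2neg : c1 * d2 + d1 ≤ 0 := by nlinarith
  have hc1d1 : c1 + d1 < a1d := by nlinarith [mul_pos (neg_pos.2 hc1) (by linarith : (0:ℝ) < 1 - a2d)]
  have hc2d2 : c2 + d2 < a2d := by nlinarith [mul_pos (neg_pos.2 hc2) (by linarith : (0:ℝ) < 1 - a1d)]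
  -- the "high p1" solution when d1 ≥ 1
  have hpbig : ∀ _ : 1 ≤ d1, (1:ℝ) = clamp01 (c1 * clamp01 (c2 * 1 + d2) + d1) := by
    intro hd1'
    rcases le_or_gt (c2 * 1 + d2) 0 with hle | hlt
    · rw [clamp01_eq_zero hle, mul_zero, zero_add, clamp01_eq_one hd1']
    · have ht : clamp01 (c2 * 1 + d2) = c2 * 1 + d2 :=
        clamp01_eq_self hlt.le (by nlinarith)
      have hid : c1 * (c2 * 1 + d2) + d1 = c1 * c2 * (1 - a1d) + a1d := by
        linear_combination c1 * hk - ha1d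
      have hge : 1 ≤ c1 * (c2 * 1 + d2) + d1 := by
        nlinarith [mul_pos (by linarith : (0:ℝ) < c1 * c2 - 1) (by linarith : (0:ℝ) < 1 - a1d)]
      rw [ht, clamp01_eq_one hge]
  -- the "high q2" solution when d2 ≥ 1
  have hqbig : ∀ _ : 1 ≤ d2, (1:ℝ) = clamp01 (c2 * clamp01 (c1 * 1 + d1) + d2) := by
    intro hd2'
    rcases le_or_gt (c1 * 1 + d1) 0 with hle | hlt
    · rw [clamp01_eq_zero hle, mul_zero, zero_add, clamp01_eq_one hd2']
    · have ht : clamp01 (c1 * 1 + d1) = c1 * 1 + d1 :=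
        clamp01_eq_self hlt.le (by nlinarith)
      have hid : c2 * (c1 * 1 + d1) + d2 = c1 * c2 * (1 - a2d) + a2d := by
        linear_combination hk - c2 * ha1d
      have hge : 1 ≤ c2 * (c1 * 1 + d1) + d2 := by
        nlinarith [mul_pos (by linarith : (0:ℝ) < c1 * c2 - 1) (by linarith : (0:ℝ) < 1 - a2d)]
      rw [ht, clamp01_eq_one hge]
  rcases lt_or_ge d1 1 with hd1' | hd1' <;> rcases lt_or_ge d2 1 with hd2' | hd2'
  · -- p = (d1, 0), q = (0, d2)
    refine ⟨(d1, 0), (0, d2), ?_, ?_, ?_, ⟨⟨hd1pos.le, hd1'.le⟩, le_rfl, zero_le_one⟩,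
      ⟨⟨le_rfl, zero_le_one⟩, hd2pos.le, hd2'.le⟩, ?_, ?_, ?_, ?_, ?_, ?_⟩
    · intro e; rw [Prod.mk.injEq] at e; linarith [e.1]
    · intro e; rw [Prod.mk.injEq] at e; linarith [e.2]
    · intro e; rw [Prod.mk.injEq] at e; linarith [e.1]
    · show d1 = clamp01 (c1 * 0 + d1)
      rw [mul_zero, zero_add, clamp01_eq_self hd1pos.le hd1'.le]
    · show (0:ℝ) = clamp01 (c2 * d1 + d2)
      rw [clamp01_eq_zero hc2d1neg]
    · show (0:ℝ) = clamp01 (c1 * d2 + d1)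
      rw [clamp01_eq_zero hc1d2neg]
    · show d2 = clamp01 (c2 * 0 + d2)
      rw [mul_zero, zero_add, clamp01_eq_self hd2pos.le hd2'.le]
    · right; left; rfl
    · left; left; rfl
  · -- p = (d1, 0), q = (clamp01 (c1*1+d1), 1)
    refine ⟨(d1, 0), (clamp01 (c1 * 1 + d1), 1), ?_, ?_, ?_,
      ⟨⟨hd1pos.le, hd1'.le⟩, le_rfl, zero_le_one⟩,
      ⟨clamp01_mem _, zero_le_one, le_rfl⟩, ?_, ?_, ?_, ?_, ?_, ?_⟩
    · intro e; rw [Prod.mk.injEq] at e; linarith [e.2]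
    · intro e; rw [Prod.mk.injEq] at e; linarith [e.2]
    · intro e; rw [Prod.mk.injEq] at e; linarith [e.2]
    · show d1 = clamp01 (c1 * 0 + d1)
      rw [mul_zero, zero_add, clamp01_eq_self hd1pos.le hd1'.le]
    · show (0:ℝ) = clamp01 (c2 * d1 + d2)
      rw [clamp01_eq_zero hc2d1neg]
    · rfl
    · exact hqbig hd2'
    · right; left; rfl
    · right; right; rfl
  · -- p = (1, clamp01 (c2*1+d2)), q = (0, d2)
    refine ⟨(1, clamp01 (c2 * 1 + d2)), (0, d2), ?_, ?_, ?_,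
      ⟨⟨zero_le_one, le_rfl⟩, clamp01_mem _⟩,
      ⟨⟨le_rfl, zero_le_one⟩, hd2pos.le, hd2'.le⟩, ?_, ?_, ?_, ?_, ?_, ?_⟩
    · intro e; rw [Prod.mk.injEq] at e; linarith [e.1]
    · intro e; rw [Prod.mk.injEq] at e; linarith [e.1]
    · intro e; rw [Prod.mk.injEq] at e; linarith [e.1]
    · exact hpbig hd1'
    · rfl
    · show (0:ℝ) = clamp01 (c1 * d2 + d1)
      rw [clamp01_eq_zero hc1d2neg]
    · show d2 = clamp01 (c2 * 0 + d2)
      rw [mul_zero, zero_add, clamp01_eq_self hd2pos.le hd2'.le]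
    · left; right; rfl
    · left; left; rfl
  · -- p = (1, clamp01 (c2*1+d2)), q = (clamp01 (c1*1+d1), 1)
    have hqlt : clamp01 (c1 * 1 + d1) < 1 := clamp01_lt_one (by nlinarith)
    refine ⟨(1, clamp01 (c2 * 1 + d2)), (clamp01 (c1 * 1 + d1), 1), ?_, ?_, ?_,
      ⟨⟨zero_le_one, le_rfl⟩, clamp01_mem _⟩,
      ⟨clamp01_mem _, zero_le_one, le_rfl⟩, ?_, ?_, ?_, ?_, ?_, ?_⟩
    · intro e; rw [Prod.mk.injEq] at e; linarith [e.1]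
    · intro e; rw [Prod.mk.injEq] at e; linarith [e.1]
    · intro e; rw [Prod.mk.injEq] at e; linarith [e.2]
    · exact hpbig hd1'
    · rfl
    · rfl
    · exact hqbig hd2'
    · left; right; rfl
    · right; right; rfl
end
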